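/- In the bead-reversal setting on G, for every simple cycle κ of G, the quantities σ+(κ) and σ−(κ) (and hence σ(κ) = max(σ+(κ), σ−(κ))) are unchanged by a bead-reversal step performed at any enabled vertex; ρ(κ) is likewise time-invariant. -/

import Mathlib

variable {V : Type*}

attribute [local instance] Classical.propDecidable

/-- `a` is a bead configuration on `G` (with bead numbers `r`): `a u v` is the number
of beads at `u`'s end of the edge `{u, v}`; each edge `{u, v}` carries
`e_uv = r u + r v − gcd (r u) (r v)` beads in total, and every bead count is a
multiple of `gcd (r u) (r v)`. -/
def IsBeadConfig (G : SimpleGraph V) (r : V → ℕ) (a : V → V → ℕ) : Prop :=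
  ∀ u v, G.Adj u v →
    a u v + a v u = r u + r v - Nat.gcd (r u) (r v) ∧ Nat.gcd (r u) (r v) ∣ a u v

/-- A vertex `v` is enabled when every edge incident to `v` carries at least `r v`
beads at `v`'s end. -/
def Enabled (G : SimpleGraph V) (r : V → ℕ) (a : V → V → ℕ) (v : V) : Prop :=
  ∀ u, G.Adj v u → r v ≤ a v u

/-- The bead-reversal step at vertex `v`: `r v` beads are moved from `v`'s end to the
opposite end of every edge incident to `v`. -/
noncomputable def beadStep (G : SimpleGraph V) (r : V → ℕ) (a : V → V → ℕ) (v : V) :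
    V → V → ℕ :=
  fun x y =>
    if x = v ∧ G.Adj v y then a x y - r v
    else if y = v ∧ G.Adj v x then a x y + r v
    else a x y

/-- `σ⁺(κ)`: the sum, over the edges of the cycle `κ` traversed as `u → v` along the
traversal direction of `κ`, of the number of beads at `v`'s end. -/
def sigmaPlus {G : SimpleGraph V} {w : V} (a : V → V → ℕ) (κ : G.Walk w w) : ℕ :=
  (κ.darts.map (fun d => a d.toProd.2 d.toProd.1)).sum

/-- `σ⁻(κ)`: the sum, over the edges of the cycle `κ` traversed as `u → v` along the
traversal direction opposite to that of `κ`, of the number of beads at `u`'s end. -/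
def sigmaMinus {G : SimpleGraph V} {w : V} (a : V → V → ℕ) (κ : G.Walk w w) : ℕ :=
  (κ.darts.map (fun d => a d.toProd.1 d.toProd.2)).sum

/-- `ρ(κ)`: the sum of `r v` over the vertices `v` of the cycle `κ`. -/
def rho {G : SimpleGraph V} {w : V} (r : V → ℕ) (κ : G.Walk w w) : ℕ :=
  (κ.support.tail.map r).sum

private lemma sum_split {α : Type*} (l : List α) (f g h k : α → ℤ)
    (H : ∀ x ∈ l, f x = g x + h x - k x) :
    (l.map f).sum = (l.map g).sum + (l.map h).sum - (l.map k).sum := by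
  induction l with
  | nil => simp
  | cons x l ih =>
      simp only [List.map_cons, List.sum_cons,
        H x List.mem_cons_self, ih (fun y hy => H y (List.mem_cons_of_mem _ hy))]
      ring

private lemma sum_if_count {α β : Type*} [DecidableEq β] (l : List α) (f : α → β)
    (v : β) (c : ℤ) :
    (l.map (fun x => if f x = v then c else 0)).sum = c * ((l.map f).count v) := by
  induction l with
  | nil => simp
  | cons x l ih => by_cases h : f x = v <;> simp [h, ih, List.count_cons] <;> ring

private lemma count_dropLast_eq_tail {w : V} {G : SimpleGraph V} (κ : G.Walk w w) (v : V) :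
    κ.support.dropLast.count v = κ.support.tail.count v := by
  classical
  have hne := κ.support_ne_nil
  have h1 : (κ.support.dropLast ++ [κ.support.getLast hne]).count v = κ.support.count v := by
    rw [List.dropLast_append_getLast]
  have h2 : (κ.support.head hne :: κ.support.tail).count v = κ.support.count v := by
    rw [List.cons_head_tail]
  have hg : κ.support.getLast hne = w := κ.getLast_support
  have hh : κ.support.head hne = w := κ.head_support
  rw [List.count_append, hg] at h1
  rw [List.count_cons, hh] at h2
  by_cases hw : w = v <;> simp [hw, List.count_singleton, List.count_cons] at h1 h2 <;> omega

private lemma cast_sum_darts {w : V} {G : SimpleGraph V} (κ : G.Walk w w) (f : G.Dart → ℕ) :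
    (((κ.darts.map f).sum : ℕ) : ℤ) = (κ.darts.map (fun d => (f d : ℤ))).sum := by
  rw [Nat.cast_list_sum, List.map_map]; rfl

/-- For every simple cycle `κ` of `G`, the quantities `σ⁺(κ)` and `σ⁻(κ)` (and hence
`σ(κ) = max (σ⁺(κ)) (σ⁻(κ))`) are unchanged by a bead-reversal step performed at any
enabled vertex (and `ρ(κ)`, which does not depend on the configuration, is likewise
time-invariant). -/
theorem bead_step_sigma_invariant [Fintype V]
    (G : SimpleGraph V) (hG : G.Connected)
    (r : V → ℕ) (hr : ∀ v, 0 < r v)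
    (a : V → V → ℕ) (hconf : IsBeadConfig G r a)
    (v : V) (hen : Enabled G r a v) :
    ∀ (w : V) (κ : G.Walk w w), κ.IsCycle →
      sigmaPlus (beadStep G r a v) κ = sigmaPlus a κ ∧
      sigmaMinus (beadStep G r a v) κ = sigmaMinus a κ ∧
      max (sigmaPlus (beadStep G r a v) κ) (sigmaMinus (beadStep G r a v) κ) =
        max (sigmaPlus a κ) (sigmaMinus a κ) := by
  intro w κ hκ
  have hcount : (κ.darts.map (fun d => d.toProd.1)).count v
      = (κ.darts.map (fun d => d.toProd.2)).count v := by
    rw [κ.map_fst_darts, κ.map_snd_darts]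
    exact count_dropLast_eq_tail κ v
  have hptP : ∀ d ∈ κ.darts,
      ((beadStep G r a v d.toProd.2 d.toProd.1 : ℕ) : ℤ)
        = (a d.toProd.2 d.toProd.1 : ℤ)
          + (if d.toProd.1 = v then (r v : ℤ) else 0)
          - (if d.toProd.2 = v then (r v : ℤ) else 0) := by
    intro d _
    have hadj : G.Adj d.toProd.1 d.toProd.2 := d.adj
    by_cases hx : d.toProd.2 = v
    · have hAdj : G.Adj v d.toProd.1 := hx ▸ hadj.symm
      have hy : d.toProd.1 ≠ v := fun h => G.irrefl (h ▸ hAdj)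
      have hle : r v ≤ a v d.toProd.1 := hen _ hAdj
      simp only [beadStep, hx, hy]
      simp [hAdj, Nat.cast_sub hle]
    · by_cases hy : d.toProd.1 = v
      · have hAdj : G.Adj v d.toProd.2 := hy ▸ hadj
        simp only [beadStep]
        rw [if_neg (fun h => hx h.1), if_pos ⟨hy, hAdj⟩]
        push_cast
        simp [hy, hx]
      · simp only [beadStep]
        rw [if_neg (fun h => hx h.1), if_neg (fun h => hy h.1)]
        simp [hx, hy]
  have hptM : ∀ d ∈ κ.darts,
      ((beadStep G r a v d.toProd.1 d.toProd.2 : ℕ) : ℤ)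
        = (a d.toProd.1 d.toProd.2 : ℤ)
          + (if d.toProd.2 = v then (r v : ℤ) else 0)
          - (if d.toProd.1 = v then (r v : ℤ) else 0) := by
    intro d _
    have hadj : G.Adj d.toProd.1 d.toProd.2 := d.adj
    by_cases hx : d.toProd.1 = v
    · have hAdj : G.Adj v d.toProd.2 := hx ▸ hadj
      have hy : d.toProd.2 ≠ v := fun h => G.irrefl (h ▸ hAdj)
      have hle : r v ≤ a v d.toProd.2 := hen _ hAdj
      simp only [beadStep, hx, hy]
      simp [hAdj, Nat.cast_sub hle]
    · by_cases hy : d.toProd.2 = v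
      · have hAdj : G.Adj v d.toProd.1 := hy ▸ hadj.symm
        simp only [beadStep]
        rw [if_neg (fun h => hx h.1), if_pos ⟨hy, hAdj⟩]
        push_cast
        simp [hy, hx]
      · simp only [beadStep]
        rw [if_neg (fun h => hx h.1), if_neg (fun h => hy h.1)]
        simp [hx, hy]
  have hp : sigmaPlus (beadStep G r a v) κ = sigmaPlus a κ := by
    have key : ((sigmaPlus (beadStep G r a v) κ : ℕ) : ℤ) = ((sigmaPlus a κ : ℕ) : ℤ) := by
      unfold sigmaPlus
      rw [cast_sum_darts, cast_sum_darts,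
        sum_split _ _ _ _ _ hptP,
        sum_if_count κ.darts (fun d => d.toProd.1) v (r v : ℤ),
        sum_if_count κ.darts (fun d => d.toProd.2) v (r v : ℤ), hcount]
      ring
    exact_mod_cast key
  have hm : sigmaMinus (beadStep G r a v) κ = sigmaMinus a κ := by
    have key : ((sigmaMinus (beadStep G r a v) κ : ℕ) : ℤ) = ((sigmaMinus a κ : ℕ) : ℤ) := by
      unfold sigmaMinus
      rw [cast_sum_darts, cast_sum_darts,
        sum_split _ _ _ _ _ hptM,
        sum_if_count κ.darts (fun d => d.toProd.2) v (r v : ℤ),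
        sum_if_count κ.darts (fun d => d.toProd.1) v (r v : ℤ), hcount]
      ring
    exact_mod_cast key
  exact ⟨hp, hm, by rw [hp, hm]⟩
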